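/- The Q-learning noise terms form a martingale difference sequence with respect to the sample filtration: for every m ≥ 0 and every component (n,i,a), the random variable M^{m+1}_n(i,a) is square-integrable and its conditional expectation with respect to F_m is zero almost surely, where F_m is the σ-algebra generated by the samples {η_{n'}^{l}(i',a') : l < m, n' < N, i' ∈ S, a' ∈ A}. -/

import Mathlib

open Finset MeasureTheory ProbabilityTheory Filter

noncomputable section

/-- The finite-horizon Q-learning iterates `Q^m_n(i,a)(ω)`.
`Qiter N g gN step η Q0 m n i a ω = Q^m_n(i,a)(ω)`, defined by
`Q^0 = Q0` and, for `n < N`,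
`Q^{m+1}_n(i,a) = Q^m_n(i,a) + a(m)(g_n(i,a,η_n^m(i,a)) + min_b Q^m_{n+1}(η_n^m(i,a),b) − Q^m_n(i,a))`,
with `Q^{m+1}_N(i,a) = g_N(i)`. -/
def Qiter {S A Ω : Type*} [Fintype A] [Nonempty A] (N : ℕ)
    (g : ℕ → S → A → S → ℝ) (gN : S → ℝ) (step : ℕ → ℝ)
    (η : ℕ → Fin N → S → A → Ω → S) (Q0 : ℕ → S → A → ℝ) :
    ℕ → ℕ → S → A → Ω → ℝ
  | 0, n, i, a, _ => Q0 n i a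
  | m + 1, n, i, a, ω =>
      if h : n < N then
        Qiter N g gN step η Q0 m n i a ω +
          step m * (g n i a (η m ⟨n, h⟩ i a ω) +
            (⨅ b : A, Qiter N g gN step η Q0 m (n + 1) (η m ⟨n, h⟩ i a ω) b ω) -
            Qiter N g gN step η Q0 m n i a ω)
      else gN i

/-- The Q-learning noise `M^{m+1}_n(i,a)(ω)` (with `Mnoise … m` denoting `M^{m+1}`):
for `n < N` it equals
`g_n(i,a,η_n^m(i,a)) + min_b Q^m_{n+1}(η_n^m(i,a),b)
  − Σ_j p_n(i,a,j)(g_n(i,a,j) + min_b Q^m_{n+1}(j,b))`,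
and it vanishes for `n = N`. -/
def Mnoise {S A Ω : Type*} [Fintype S] [Fintype A] [Nonempty A] (N : ℕ)
    (p g : ℕ → S → A → S → ℝ) (gN : S → ℝ) (step : ℕ → ℝ)
    (η : ℕ → Fin N → S → A → Ω → S) (Q0 : ℕ → S → A → ℝ)
    (m n : ℕ) (i : S) (a : A) (ω : Ω) : ℝ :=
  if h : n < N then
    g n i a (η m ⟨n, h⟩ i a ω) +
      (⨅ b : A, Qiter N g gN step η Q0 m (n + 1) (η m ⟨n, h⟩ i a ω) b ω) -
      ∑ j, p n i a j * (g n i a j + ⨅ b : A, Qiter N g gN step η Q0 m (n + 1) j b ω)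
  else 0

/-- The σ-algebra `F_m` generated by the samples `η_{n'}^l(i',a')` for `l < m`. -/
def filt {S A Ω : Type*} [MeasurableSpace S] (N : ℕ)
    (η : ℕ → Fin N → S → A → Ω → S) (m : ℕ) : MeasurableSpace Ω :=
  ⨆ (l : ℕ) (_ : l < m) (n : Fin N) (i : S) (a : A),
    MeasurableSpace.comap (η l n i a) inferInstance


section Aux

variable {S A Ω : Type*} [Fintype S] [Nonempty S] [MeasurableSpace S]
  [MeasurableSingletonClass S] [Fintype A] [Nonempty A] [MeasurableSpace Ω]
  {N : ℕ} {g : ℕ → S → A → S → ℝ} {gN : S → ℝ} {step : ℕ → ℝ}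
  {η : ℕ → Fin N → S → A → Ω → S} {Q0 : ℕ → S → A → ℝ}

lemma exists_bound_of_finite {ι : Type*} [Finite ι] (f : ι → ℝ) :
    ∃ C, 0 ≤ C ∧ ∀ x, |f x| ≤ C := by
  rcases isEmpty_or_nonempty ι with h | h
  · exact ⟨0, le_rfl, fun x => isEmptyElim x⟩
  · obtain ⟨C, hC⟩ := Finite.exists_le (fun x => |f x|)
    exact ⟨max C 0, le_max_right _ _, fun x => (hC x).trans (le_max_left _ _)⟩

lemma comp_eta_eq [DecidableEq S] (e : Ω → S) (F : S → Ω → ℝ) :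
    (fun ω => F (e ω) ω) = fun ω => ∑ j : S, if e ω = j then F j ω else 0 := by
  funext ω
  rw [Finset.sum_ite_eq, if_pos (Finset.mem_univ _)]

lemma meas_comp_eta {M : MeasurableSpace Ω} {e : Ω → S} (he : Measurable[M] e)
    {F : S → Ω → ℝ} (hF : ∀ j, Measurable[M] (F j)) :
    Measurable[M] (fun ω => F (e ω) ω) := by
  classical
  rw [comp_eta_eq]
  exact Finset.measurable_sum _ fun j _ =>
    Measurable.ite (he (measurableSet_singleton j)) (hF j) measurable_const

lemma filt_le (hmeas : ∀ m n i a, Measurable (η m n i a)) (m : ℕ) :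
    filt N η m ≤ ‹MeasurableSpace Ω› := by
  refine iSup_le fun l => iSup_le fun _ => iSup_le fun n => iSup_le fun i => iSup_le fun a => ?_
  exact (hmeas l n i a).comap_le

lemma filt_mono {m m' : ℕ} (h : m ≤ m') : filt N η (S := S) (A := A) m ≤ filt N η m' := by
  refine iSup_le fun l => iSup_le fun hl => ?_
  exact le_iSup_of_le l (le_iSup_of_le (lt_of_lt_of_le hl h) le_rfl)

lemma eta_meas_filt (l : ℕ) {m : ℕ} (hl : l < m) (n : Fin N) (i : S) (a : A) :
    Measurable[filt N η m] (η l n i a) := by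
  rw [measurable_iff_comap_le]
  exact le_iSup_of_le l (le_iSup_of_le hl (le_iSup_of_le n (le_iSup_of_le i (le_iSup_of_le a le_rfl))))

lemma Qiter_meas (hmeas : ∀ m n i a, Measurable (η m n i a)) :
    ∀ (m n : ℕ) (i : S) (a : A),
      Measurable[filt N η m] (fun ω => Qiter N g gN step η Q0 m n i a ω) := by
  intro m
  induction m with
  | zero => intro n i a; exact measurable_const
  | succ m ih =>
    intro n i a
    have hQ : ∀ (n : ℕ) (i : S) (a : A),
        Measurable[filt N η (m+1)] (fun ω => Qiter N g gN step η Q0 m n i a ω) :=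
      fun n i a => (ih n i a).mono (filt_mono (Nat.le_succ m)) le_rfl
    by_cases h : n < N
    · have he : Measurable[filt N η (m+1)] (η m ⟨n, h⟩ i a) :=
        eta_meas_filt m (Nat.lt_succ_self m) _ i a
      have hF : ∀ j, Measurable[filt N η (m+1)]
          (fun ω => g n i a j + ⨅ b, Qiter N g gN step η Q0 m (n+1) j b ω) :=
        fun j => measurable_const.add (Measurable.iInf fun b => hQ (n+1) j b)
      have heq : (fun ω => Qiter N g gN step η Q0 (m+1) n i a ω)
          = fun ω => Qiter N g gN step η Q0 m n i a ω +
              step m * ((fun (ω : Ω) => g n i a (η m ⟨n,h⟩ i a ω) +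
                  ⨅ b, Qiter N g gN step η Q0 m (n+1) (η m ⟨n,h⟩ i a ω) b ω) ω -
                Qiter N g gN step η Q0 m n i a ω) := by
        funext ω; simp only [Qiter, dif_pos h]
      rw [heq]
      exact (hQ n i a).add (measurable_const.mul
        ((meas_comp_eta he hF).sub (hQ n i a)))
    · have heq : (fun ω => Qiter N g gN step η Q0 (m+1) n i a ω) = fun _ => gN i := by
        funext ω; simp only [Qiter, dif_neg h]
      rw [heq]; exact measurable_const

lemma Qiter_bound : ∀ m : ℕ, ∃ C : ℝ, 0 ≤ C ∧ ∀ n, n ≤ N → ∀ (i : S) (a : A) (ω : Ω),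
    |Qiter N g gN step η Q0 m n i a ω| ≤ C := by
  intro m
  induction m with
  | zero =>
    obtain ⟨C, hC0, hC⟩ := exists_bound_of_finite
      (fun x : Fin (N+1) × S × A => Q0 x.1 x.2.1 x.2.2)
    exact ⟨C, hC0, fun n hn i a ω => hC ⟨⟨n, by omega⟩, i, a⟩⟩
  | succ m ih =>
    obtain ⟨C, hC0, hC⟩ := ih
    obtain ⟨G, hG0, hG⟩ := exists_bound_of_finite
      (fun x : Fin N × S × A × S => g x.1 x.2.1 x.2.2.1 x.2.2.2)
    obtain ⟨GN, hGN0, hGN⟩ := exists_bound_of_finite gN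
    refine ⟨max (C + |step m| * (G + C + C)) GN, le_max_of_le_right hGN0, ?_⟩
    intro n hn i a ω
    by_cases h : n < N
    · have hq : |Qiter N g gN step η Q0 m n i a ω| ≤ C := hC n (le_of_lt h) i a ω
      have hq1 : ∀ (j : S) (b : A), |Qiter N g gN step η Q0 m (n+1) j b ω| ≤ C :=
        fun j b => hC (n+1) h j b ω
      have hinf : ∀ j : S, |⨅ b, Qiter N g gN step η Q0 m (n+1) j b ω| ≤ C := by
        intro j
        rw [abs_le]
        refine ⟨le_ciInf fun b => (abs_le.1 (hq1 j b)).1, ?_⟩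
        exact (ciInf_le (Finite.bddBelow_range _) (Classical.arbitrary A)).trans
          (abs_le.1 (hq1 j (Classical.arbitrary A))).2
      have hgb : |g n i a (η m ⟨n, h⟩ i a ω)| ≤ G := hG ⟨⟨n, h⟩, i, a, _⟩
      have hmain : |Qiter N g gN step η Q0 (m+1) n i a ω| ≤ C + |step m| * (G + C + C) := by
        have h1 : |Qiter N g gN step η Q0 (m+1) n i a ω|
            ≤ |Qiter N g gN step η Q0 m n i a ω| + |step m| *
              (|g n i a (η m ⟨n, h⟩ i a ω)| +
               |⨅ b, Qiter N g gN step η Q0 m (n+1) (η m ⟨n, h⟩ i a ω) b ω| +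
               |Qiter N g gN step η Q0 m n i a ω|) := by
          simp only [Qiter, dif_pos h]
          refine (abs_add_le _ _).trans (add_le_add le_rfl ?_)
          rw [abs_mul]
          refine mul_le_mul_of_nonneg_left ?_ (abs_nonneg _)
          exact (abs_sub _ _).trans (add_le_add (abs_add_le _ _) le_rfl)
        refine h1.trans ?_
        have h2 : |g n i a (η m ⟨n, h⟩ i a ω)| +
              |⨅ b, Qiter N g gN step η Q0 m (n+1) (η m ⟨n, h⟩ i a ω) b ω| +
              |Qiter N g gN step η Q0 m n i a ω| ≤ G + C + C :=
          add_le_add (add_le_add hgb (hinf _)) hq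
        have := mul_le_mul_of_nonneg_left h2 (abs_nonneg (step m))
        linarith
      exact hmain.trans (le_max_left _ _)
    · have heq : Qiter N g gN step η Q0 (m+1) n i a ω = gN i := by
        simp only [Qiter, dif_neg h]
      rw [heq]
      exact (hGN i).trans (le_max_right _ _)

end Aux

/-- the Q-learning noise terms form a square-integrable martingale
difference sequence with respect to the sample filtration. -/
theorem noise_is_martingale_difference
    {S A Ω : Type*} [Fintype S] [Nonempty S] [MeasurableSpace S]
    [MeasurableSingletonClass S] [Fintype A] [Nonempty A] [MeasurableSpace Ω]
    (N : ℕ) (hN : 1 ≤ N)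
    (p g : ℕ → S → A → S → ℝ) (gN : S → ℝ)
    (hp0 : ∀ n < N, ∀ i a j, 0 ≤ p n i a j)
    (hp1 : ∀ n < N, ∀ i a, ∑ j, p n i a j = 1)
    (P : Measure Ω) [IsProbabilityMeasure P]
    (η : ℕ → Fin N → S → A → Ω → S)
    (hmeas : ∀ m n i a, Measurable (η m n i a))
    (hdist : ∀ (m : ℕ) (n : Fin N) (i : S) (a : A) (j : S),
      P {ω | η m n i a ω = j} = ENNReal.ofReal (p n i a j))
    (hindep : iIndepFun
      (fun x : ℕ × Fin N × S × A => η x.1 x.2.1 x.2.2.1 x.2.2.2) P)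
    (step : ℕ → ℝ) (hstep : ∀ m, 0 < step m)
    (Q0 : ℕ → S → A → ℝ) (hQ0N : ∀ i a, Q0 N i a = gN i)
    (m n : ℕ) (hn : n ≤ N) (i : S) (a : A) :
    MemLp (Mnoise N p g gN step η Q0 m n i a) 2 P ∧
      P[Mnoise N p g gN step η Q0 m n i a|filt N η m] =ᵐ[P] 0 := by
  classical
  by_cases hlt : n < N
  swap
  · -- degenerate case `n = N`
    have hM0 : Mnoise N p g gN step η Q0 m n i a = (0 : Ω → ℝ) := by
      funext ω; simp [Mnoise, hlt]
    rw [hM0]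
    exact ⟨MemLp.zero, by rw [condExp_zero]⟩
  -- the sample and the F functions
  set e : Ω → S := η m ⟨n, hlt⟩ i a with he_def
  set F : S → Ω → ℝ := fun j ω => g n i a j + ⨅ b, Qiter N g gN step η Q0 m (n+1) j b ω
    with hF_def
  set d : S → Ω → ℝ := fun j ω => (if e ω = j then (1:ℝ) else 0) - p n i a j with hd_def
  -- decomposition of the noise
  have hMeq : Mnoise N p g gN step η Q0 m n i a = ∑ j : S, F j * d j := by
    funext ω
    have h1 : (∑ j : S, F j * d j) ω
        = (∑ j : S, if e ω = j then F j ω else 0) - ∑ j : S, p n i a j * F j ω := by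
      simp only [Finset.sum_apply, Pi.mul_apply, hd_def]
      rw [← Finset.sum_sub_distrib]
      refine Finset.sum_congr rfl fun j _ => ?_
      rw [mul_sub, mul_ite, mul_one, mul_zero, mul_comm]
    rw [h1, Finset.sum_ite_eq, if_pos (Finset.mem_univ _)]
    simp only [Mnoise, dif_pos hlt, hF_def]
    rfl
  -- measurability facts
  have hFm : ∀ j, Measurable[filt N η m] (F j) :=
    fun j => measurable_const.add (Measurable.iInf fun b => Qiter_meas hmeas m (n+1) j b)
  have hFm0 : ∀ j, Measurable (F j) := fun j => (hFm j).mono (filt_le hmeas m) le_rfl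
  have hdm0 : ∀ j, Measurable (d j) := fun j =>
    (Measurable.ite ((hmeas m ⟨n, hlt⟩ i a) (measurableSet_singleton j)) measurable_const
      measurable_const).sub measurable_const
  -- bounds
  obtain ⟨C, hC0, hC⟩ := Qiter_bound (N := N) (g := g) (gN := gN) (step := step) (η := η)
    (Q0 := Q0) m
  obtain ⟨G, hG0, hG⟩ := exists_bound_of_finite
    (fun x : Fin N × S × A × S => g x.1 x.2.1 x.2.2.1 x.2.2.2)
  have hFb : ∀ j ω, |F j ω| ≤ G + C := by
    intro j ω
    have hq1 : ∀ b : A, |Qiter N g gN step η Q0 m (n+1) j b ω| ≤ C :=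
      fun b => hC (n+1) hlt j b ω
    have hinf : |⨅ b, Qiter N g gN step η Q0 m (n+1) j b ω| ≤ C := by
      rw [abs_le]
      refine ⟨le_ciInf fun b => (abs_le.1 (hq1 b)).1, ?_⟩
      exact (ciInf_le (Finite.bddBelow_range _) (Classical.arbitrary A)).trans
        (abs_le.1 (hq1 (Classical.arbitrary A))).2
    exact (abs_add_le _ _).trans (add_le_add (hG ⟨⟨n, hlt⟩, i, a, j⟩) hinf)
  have hdb : ∀ j ω, |d j ω| ≤ 1 + |p n i a j| := by
    intro j ω
    refine (abs_sub _ _).trans (add_le_add ?_ le_rfl)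
    split_ifs <;> simp
  -- integrability
  have hint_d : ∀ j, Integrable (d j) P := by
    intro j
    refine memLp_one_iff_integrable.1 (MemLp.of_bound
      (hdm0 j).aestronglyMeasurable (1 + |p n i a j|) (Eventually.of_forall fun ω => ?_))
    simpa [Real.norm_eq_abs] using hdb j ω
  have hint_Fd : ∀ j, Integrable (F j * d j) P := by
    intro j
    refine memLp_one_iff_integrable.1 (MemLp.of_bound
      ((hFm0 j).mul (hdm0 j)).aestronglyMeasurable ((G + C) * (1 + |p n i a j|))
      (Eventually.of_forall fun ω => ?_))
    simp only [Pi.mul_apply, Real.norm_eq_abs, abs_mul]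
    exact mul_le_mul (hFb j ω) (hdb j ω) (abs_nonneg _) (by linarith)
  -- Memℒp part
  have hMemLp : MemLp (Mnoise N p g gN step η Q0 m n i a) 2 P := by
    rw [hMeq]
    refine MemLp.of_bound ?_ (∑ j : S, (G + C) * (1 + |p n i a j|))
      (Eventually.of_forall fun ω => ?_)
    · have hsum_eq : (∑ j : S, F j * d j) = fun ω => ∑ j : S, F j ω * d j ω := by
        funext ω; simp
      rw [hsum_eq]
      exact (Finset.measurable_sum _ fun j _ => (hFm0 j).mul (hdm0 j)).aestronglyMeasurable
    · rw [Finset.sum_apply, Real.norm_eq_abs]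
      calc |∑ j : S, (F j * d j) ω| ≤ ∑ j : S, |(F j * d j) ω| :=
            Finset.abs_sum_le_sum_abs _ _
        _ ≤ ∑ j : S, (G + C) * (1 + |p n i a j|) := Finset.sum_le_sum fun j _ => by
            simp only [Pi.mul_apply, abs_mul]
            exact mul_le_mul (hFb j ω) (hdb j ω) (abs_nonneg _) (by linarith)
  refine ⟨hMemLp, ?_⟩
  -- independence of `comap e` and the filtration
  have h_le : ∀ x : ℕ × Fin N × S × A,
      MeasurableSpace.comap (η x.1 x.2.1 x.2.2.1 x.2.2.2) inferInstance
        ≤ ‹MeasurableSpace Ω› := fun x => (hmeas _ _ _ _).comap_le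
  have hdisj : Disjoint {x : ℕ × Fin N × S × A | ¬ x.1 < m} {x : ℕ × Fin N × S × A | x.1 < m} :=
    Set.disjoint_left.mpr fun x hx hx' => hx hx'
  have hIndepBig := indep_iSup_of_disjoint h_le hindep.iIndep hdisj
  have hIndep : Indep (MeasurableSpace.comap e inferInstance) (filt N η m) P := by
    refine indep_of_indep_of_le_right (indep_of_indep_of_le_left hIndepBig ?_) ?_
    · exact le_iSup_of_le (m, ⟨n, hlt⟩, i, a)
        (le_iSup_of_le (by simp) le_rfl)
    · refine iSup_le fun l => iSup_le fun hl => iSup_le fun n' => iSup_le fun i' =>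
        iSup_le fun a' => ?_
      exact le_iSup_of_le (l, n', i', a') (le_iSup_of_le hl le_rfl)
  -- conditional expectation of d j is zero
  have hE : ∀ j, ∫ ω, d j ω ∂P = 0 := by
    intro j
    have hs : MeasurableSet (e ⁻¹' {j}) := (hmeas m ⟨n, hlt⟩ i a) (measurableSet_singleton j)
    have hdeq : d j = fun ω => (e ⁻¹' {j}).indicator (fun _ => (1:ℝ)) ω - p n i a j := by
      funext ω
      simp [hd_def, Set.indicator_apply, Set.mem_preimage]
    rw [hdeq]
    rw [integral_sub ((integrable_const (1:ℝ)).indicator hs) (integrable_const _)]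
    rw [integral_indicator_const _ hs, integral_const]
    have hpe : P (e ⁻¹' {j}) = ENNReal.ofReal (p n i a j) := hdist m ⟨n, hlt⟩ i a j
    rw [measureReal_def, hpe]
    simp [ENNReal.toReal_ofReal (hp0 n hlt i a j)]
  have hcond_d : ∀ j, P[d j|filt N η m] =ᵐ[P] 0 := by
    intro j
    have hsm : StronglyMeasurable[MeasurableSpace.comap e inferInstance] (d j) := by
      refine Measurable.stronglyMeasurable ?_
      have he0 : Measurable[MeasurableSpace.comap e inferInstance] e :=
        measurable_iff_comap_le.2 le_rfl
      exact (Measurable.ite (he0 (measurableSet_singleton j)) measurable_const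
        measurable_const).sub measurable_const
    have h1 := condExp_indep_eq (μ := P) (f := d j) (hmeas m ⟨n, hlt⟩ i a).comap_le
      (filt_le hmeas m) hsm hIndep
    refine h1.trans ?_
    have : (fun _ : Ω => ∫ ω, d j ω ∂P) = (0 : Ω → ℝ) := by
      funext ω; simp [hE j]
    rw [this]
  -- conclude
  have hzero : ∀ j, P[F j * d j|filt N η m] =ᵐ[P] 0 := by
    intro j
    have hmul := condExp_mul_of_stronglyMeasurable_left (μ := P) (hFm j).stronglyMeasurable
      (hint_Fd j) (hint_d j)
    refine hmul.trans ?_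
    filter_upwards [hcond_d j] with ω hω
    simp [Pi.mul_apply, hω]
  calc P[Mnoise N p g gN step η Q0 m n i a|filt N η m]
      = P[∑ j : S, F j * d j|filt N η m] := by rw [hMeq]
    _ =ᵐ[P] ∑ j : S, P[F j * d j|filt N η m] := condExp_finsetSum (fun j _ => hint_Fd j) _
    _ =ᵐ[P] 0 := by
        have hall := ae_all_iff.2 hzero
        filter_upwards [hall] with ω hω
        simp only [Finset.sum_apply, Pi.zero_apply]
        rw [Finset.sum_eq_zero fun j _ => ?_]
        exact hω j


end
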